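/- Let X be a convex polyomino such that V(X) ⊆ ℕ² is a sublattice of ℕ² with minimum (0,0) and maximum (m,n). Then every maximal chain of V(X) has exactly m+n+1 elements and is of the form μ_0 = (0,0) < μ_1 < ⋯ < μ_{m+n} = (m,n) with μ_i − μ_{i−1} ∈ {(1,0),(0,1)} for all 1 ≤ i ≤ m+n; i.e., every maximal chain of V(X) is a monotone lattice path from (0,0) to (m,n) with unit horizontal and vertical steps through vertices of X. -/

import Mathlib

/-!  Cells in ℤ² are identified with their top-right corners: the cell `C v`
is the unit square `[v.1 - 1, v.1] × [v.2 - 1, v.2] ⊆ ℝ²`. -/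

/-- Two cells (identified by their top-right corners) are adjacent if they share an edge. -/
def Adj (c d : ℤ × ℤ) : Prop :=
  (c.1 = d.1 ∧ (c.2 = d.2 + 1 ∨ d.2 = c.2 + 1)) ∨
  (c.2 = d.2 ∧ (c.1 = d.1 + 1 ∨ d.1 = c.1 + 1))

/-- A polyomino: a nonempty finite set of cells, connected under adjacency. -/
def IsPolyomino (X : Finset (ℤ × ℤ)) : Prop :=
  X.Nonempty ∧ ∀ c ∈ X, ∀ d ∈ X,
    Relation.ReflTransGen (fun a b => a ∈ X ∧ b ∈ X ∧ Adj a b) c d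

/-- A polyomino is convex if it is both row-convex and column-convex. -/
def IsConvexPoly (X : Finset (ℤ × ℤ)) : Prop :=
  (∀ a b x y : ℤ, (a, y) ∈ X → (b, y) ∈ X → a ≤ x → x ≤ b → (x, y) ∈ X) ∧
  (∀ a b x y : ℤ, (y, a) ∈ X → (y, b) ∈ X → a ≤ x → x ≤ b → (y, x) ∈ X)

/-- `X` is thin if it contains no 2 × 2 block of four cells. -/
def IsThin (X : Finset (ℤ × ℤ)) : Prop :=
  ¬ ∃ w : ℤ × ℤ, w ∈ X ∧ w + ((1, 0) : ℤ × ℤ) ∈ X ∧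
    w + ((0, 1) : ℤ × ℤ) ∈ X ∧ w + ((1, 1) : ℤ × ℤ) ∈ X

/-- `X` is `L`-convex: convex, and any two cells are joined by a monotone path of cells
of `X` changing direction (horizontal to vertical or vice versa) at most once. -/
def IsLConvexPoly (X : Finset (ℤ × ℤ)) : Prop :=
  IsConvexPoly X ∧ ∀ c ∈ X, ∀ d ∈ X,
    ((∀ x : ℤ, min c.1 d.1 ≤ x → x ≤ max c.1 d.1 → ((x, c.2) : ℤ × ℤ) ∈ X) ∧
     (∀ y : ℤ, min c.2 d.2 ≤ y → y ≤ max c.2 d.2 → ((d.1, y) : ℤ × ℤ) ∈ X)) ∨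
    ((∀ y : ℤ, min c.2 d.2 ≤ y → y ≤ max c.2 d.2 → ((c.1, y) : ℤ × ℤ) ∈ X) ∧
     (∀ x : ℤ, min c.1 d.1 ≤ x → x ≤ max c.1 d.1 → ((x, d.2) : ℤ × ℤ) ∈ X))

/-- The vertex set `V(X)`: all corners of cells of `X`, partially ordered componentwise. -/
def Verts (X : Finset (ℤ × ℤ)) : Set (ℤ × ℤ) :=
  {v | ∃ c ∈ X, v = c ∨ v = c - ((1, 0) : ℤ × ℤ) ∨
    v = c - ((0, 1) : ℤ × ℤ) ∨ v = c - ((1, 1) : ℤ × ℤ)}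

/-- Setup: `V(X) ⊆ ℕ²` is a sublattice of `ℕ²` (closed under componentwise max and min)
with minimum `(0,0)` and maximum `(m,n)`. -/
def LatticeSetup (X : Finset (ℤ × ℤ)) (m n : ℕ) : Prop :=
  (∀ a ∈ Verts X, ∀ b ∈ Verts X, a ⊔ b ∈ Verts X ∧ a ⊓ b ∈ Verts X) ∧
  ((0, 0) : ℤ × ℤ) ∈ Verts X ∧ (((m : ℤ), (n : ℤ)) : ℤ × ℤ) ∈ Verts X ∧
  ∀ v ∈ Verts X, ((0, 0) : ℤ × ℤ) ≤ v ∧ v ≤ (((m : ℤ), (n : ℤ)) : ℤ × ℤ)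

/-- Join-irreducible elements of the lattice `V(X)`: nonminimal elements that are not
the join of two elements strictly below them. -/
def JoinIrr (X : Finset (ℤ × ℤ)) : Set (ℤ × ℤ) :=
  {p | p ∈ Verts X ∧ (∃ q ∈ Verts X, q < p) ∧
    ∀ a ∈ Verts X, ∀ b ∈ Verts X, a < p → b < p → a ⊔ b ≠ p}

/-- `ω` is an injective order-preserving map from `JI(X)` to `ℕ`. -/
def OmegaOK (X : Finset (ℤ × ℤ)) (ω : ℤ × ℤ → ℕ) : Prop :=
  Set.InjOn ω (JoinIrr X) ∧
  ∀ p ∈ JoinIrr X, ∀ q ∈ JoinIrr X, p ≤ q → ω p ≤ ω q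

/-- A maximal chain of `V(X)`, written as a monotone unit lattice path
`μ 0 = (0,0) < μ 1 < ⋯ < μ (m+n) = (m,n)` through vertices of `X`
(normalized by `μ i = (m,n)` for `i ≥ m+n`). -/
def IsMaxChainPath (X : Finset (ℤ × ℤ)) (m n : ℕ) (μ : ℕ → ℤ × ℤ) : Prop :=
  μ 0 = (0, 0) ∧
  (∀ i, i < m + n → μ (i + 1) - μ i = ((1, 0) : ℤ × ℤ) ∨
    μ (i + 1) - μ i = ((0, 1) : ℤ × ℤ)) ∧
  (∀ i, m + n ≤ i → μ i = (((m : ℤ), (n : ℤ)) : ℤ × ℤ)) ∧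
  (∀ i, i ≤ m + n → μ i ∈ Verts X)

/-- `i` is a descent of the maximal chain `μ`:  `ω p_i > ω p_{i+1}`, where `p_j` is the
unique join-irreducible `p` with `p ≤ μ j` and `p ≰ μ (j-1)`. -/
def DescentAt (X : Finset (ℤ × ℤ)) (ω : ℤ × ℤ → ℕ) (μ : ℕ → ℤ × ℤ) (i : ℕ) : Prop :=
  ∃ p ∈ JoinIrr X, ∃ q ∈ JoinIrr X,
    p ≤ μ i ∧ ¬ p ≤ μ (i - 1) ∧ q ≤ μ (i + 1) ∧ ¬ q ≤ μ i ∧ ω q < ω p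

/-- The descent set of a maximal chain: descents `i` with `1 ≤ i ≤ m+n-1`. -/
def Des (X : Finset (ℤ × ℤ)) (m n : ℕ) (ω : ℤ × ℤ → ℕ) (μ : ℕ → ℤ × ℤ) : Set ℕ :=
  {i | 1 ≤ i ∧ i < m + n ∧ DescentAt X ω μ i}

/-- `|M_k(X)|`: the number of maximal chains of `V(X)` with exactly `k` descents. -/
noncomputable def numChains (X : Finset (ℤ × ℤ)) (m n : ℕ) (ω : ℤ × ℤ → ℕ) (k : ℕ) : ℕ :=
  Set.ncard {μ : ℕ → ℤ × ℤ | IsMaxChainPath X m n μ ∧ (Des X m n ω μ).ncard = k}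

/-- A `k`-rook configuration in `X`: `k` cells of `X`, no two in the same row or column. -/
def IsRookConfig (X : Finset (ℤ × ℤ)) (k : ℕ) (S : Finset (ℤ × ℤ)) : Prop :=
  ↑S ⊆ (↑X : Set (ℤ × ℤ)) ∧ S.card = k ∧
  ∀ c ∈ S, ∀ d ∈ S, c ≠ d → c.1 ≠ d.1 ∧ c.2 ≠ d.2

/-- `r_k`: the number of `k`-rook configurations in `X`. -/
noncomputable def rook (X : Finset (ℤ × ℤ)) (k : ℕ) : ℕ :=
  Set.ncard {S : Finset (ℤ × ℤ) | IsRookConfig X k S}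

/-- The map `ψ`: sends a maximal chain `μ` to the set of cells `C (μ (i+1))` for `i ∈ Des μ`. -/
def psi (X : Finset (ℤ × ℤ)) (m n : ℕ) (ω : ℤ × ℤ → ℕ) (μ : ℕ → ℤ × ℤ) :
    Set (ℤ × ℤ) :=
  (fun i => μ (i + 1)) '' Des X m n ω μ

/-- The ideal `I_X` of the polyomino ring: generated by the inner 2-minors
`x_a x_b - x_c x_d` for intervals `[a,b]` of `V(X)`. -/
noncomputable def polyominoIdeal (kk : Type*) [Field kk] (X : Finset (ℤ × ℤ)) :
    Ideal (MvPolynomial (Verts X) kk) :=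
  Ideal.span {f | ∃ a b c d : Verts X,
    (a : ℤ × ℤ) < (b : ℤ × ℤ) ∧
    (c : ℤ × ℤ) = (((a : ℤ × ℤ).1, (b : ℤ × ℤ).2) : ℤ × ℤ) ∧
    (d : ℤ × ℤ) = (((b : ℤ × ℤ).1, (a : ℤ × ℤ).2) : ℤ × ℤ) ∧
    f = MvPolynomial.X a * MvPolynomial.X b - MvPolynomial.X c * MvPolynomial.X d}

/-- `dim_k (k[X])_i`: the dimension of the degree-`i` graded component of `k[X] = R/I_X`,
realized as the image of the homogeneous degree-`i` part of `R` in the quotient. -/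
noncomputable def hilbCoeff (kk : Type*) [Field kk] (X : Finset (ℤ × ℤ)) (i : ℕ) : ℕ :=
  Module.finrank kk (Submodule.map
    (Ideal.Quotient.mkₐ kk (polyominoIdeal kk X)).toLinearMap
    (MvPolynomial.homogeneousSubmodule (Verts X) kk i))

/-- The Hilbert series `HS(t) = Σ_{i ≥ 0} dim_k (k[X])_i t^i ∈ ℤ[[t]]`. -/
noncomputable def hilbSeries (kk : Type*) [Field kk] (X : Finset (ℤ × ℤ)) :
    PowerSeries ℤ :=
  PowerSeries.mk fun i => (hilbCoeff kk X i : ℤ)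

/-- The region `⋃ X ⊆ ℝ²` covered by the cells of `X`. -/
def Region (X : Finset (ℤ × ℤ)) : Set (ℝ × ℝ) :=
  ⋃ c ∈ X, Set.Icc (((c.1 : ℝ) - 1, (c.2 : ℝ) - 1) : ℝ × ℝ) (((c.1 : ℝ), (c.2 : ℝ)) : ℝ × ℝ)

/-- Left-boundary vertices: top-left corners of cells of `X` lying on the topological
boundary of the region `⋃ X ⊆ ℝ²`. -/
def LeftBdry (X : Finset (ℤ × ℤ)) : Set (ℤ × ℤ) :=
  {v | (∃ c ∈ X, v = c - ((1, 0) : ℤ × ℤ)) ∧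
    (((v.1 : ℝ), (v.2 : ℝ)) : ℝ × ℝ) ∈ frontier (Region X)}

/-- Bottom-boundary vertices: bottom-right corners of cells of `X` lying on the topological
boundary of the region `⋃ X ⊆ ℝ²`. -/
def BottomBdry (X : Finset (ℤ × ℤ)) : Set (ℤ × ℤ) :=
  {v | (∃ c ∈ X, v = c - ((0, 1) : ℤ × ℤ)) ∧
    (((v.1 : ℝ), (v.2 : ℝ)) : ℝ × ℝ) ∈ frontier (Region X)}

section Helpers

lemma verts_cases {X : Finset (ℤ × ℤ)} {v : ℤ × ℤ} (h : v ∈ Verts X) :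
    ∃ p q : ℤ, (p, q) ∈ X ∧ (p = v.1 ∨ p = v.1 + 1) ∧ (q = v.2 ∨ q = v.2 + 1) := by
  obtain ⟨cc, hX, hor⟩ := h
  refine ⟨cc.1, cc.2, by simpa using hX, ?_, ?_⟩ <;>
    rcases hor with h|h|h|h <;> subst h <;> simp <;> omega

lemma mem_verts_self {X : Finset (ℤ × ℤ)} {p q : ℤ} (h : (p, q) ∈ X) :
    ((p, q) : ℤ × ℤ) ∈ Verts X := ⟨(p, q), h, Or.inl rfl⟩

lemma mem_verts_left {X : Finset (ℤ × ℤ)} {p q : ℤ} (h : (p, q) ∈ X) :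
    ((p - 1, q) : ℤ × ℤ) ∈ Verts X :=
  ⟨(p, q), h, Or.inr (Or.inl (by simp [Prod.ext_iff]))⟩

lemma mem_verts_bot {X : Finset (ℤ × ℤ)} {p q : ℤ} (h : (p, q) ∈ X) :
    ((p, q - 1) : ℤ × ℤ) ∈ Verts X :=
  ⟨(p, q), h, Or.inr (Or.inr (Or.inl (by simp [Prod.ext_iff])))⟩

lemma cross_row (X : Finset (ℤ × ℤ)) {c d : ℤ × ℤ}
    (h : Relation.ReflTransGen (fun a b => a ∈ X ∧ b ∈ X ∧ Adj a b) c d)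
    (r : ℤ) (h1 : c.2 ≤ r) : r < d.2 → ∃ x0 : ℤ, (x0, r) ∈ X ∧ (x0, r + 1) ∈ X := by
  induction h with
  | refl => intro h2; omega
  | @tail b e h' step ih =>
    intro h2
    by_cases hb : r < b.2
    · exact ih hb
    · obtain ⟨hbX, heX, hadj⟩ := step
      have hb1 : e.1 = b.1 ∧ e.2 = b.2 + 1 ∧ r = b.2 := by unfold Adj at hadj; omega
      refine ⟨b.1, ?_, ?_⟩
      · have : ((b.1, r) : ℤ × ℤ) = b := by rw [hb1.2.2]
        rwa [this]
      · have : ((b.1, r + 1) : ℤ × ℤ) = e := by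
          rw [Prod.ext_iff]; constructor <;> simp <;> omega
        rwa [this]

lemma cross_col (X : Finset (ℤ × ℤ)) {c d : ℤ × ℤ}
    (h : Relation.ReflTransGen (fun a b => a ∈ X ∧ b ∈ X ∧ Adj a b) c d)
    (r : ℤ) (h1 : c.1 ≤ r) : r < d.1 → ∃ y0 : ℤ, (r, y0) ∈ X ∧ (r + 1, y0) ∈ X := by
  induction h with
  | refl => intro h2; omega
  | @tail b e h' step ih =>
    intro h2
    by_cases hb : r < b.1
    · exact ih hb
    · obtain ⟨hbX, heX, hadj⟩ := step
      have hb1 : e.2 = b.2 ∧ e.1 = b.1 + 1 ∧ r = b.1 := by unfold Adj at hadj; omega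
      refine ⟨b.2, ?_, ?_⟩
      · have : ((r, b.2) : ℤ × ℤ) = b := by rw [hb1.2.2]
        rwa [this]
      · have : ((r + 1, b.2) : ℤ × ℤ) = e := by
          rw [Prod.ext_iff]; constructor <;> simp <;> omega
        rwa [this]

lemma escape (X : Finset (ℤ × ℤ)) {c d : ℤ × ℤ}
    (h : Relation.ReflTransGen (fun a b => a ∈ X ∧ b ∈ X ∧ Adj a b) c d) :
    (c.1 < d.1 ∨ c.2 < d.2) →
    ∃ e ∈ X, (e.1 = c.1 + 1 ∧ e.2 ≤ c.2) ∨ (e.1 ≤ c.1 ∧ e.2 = c.2 + 1) := by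
  induction h with
  | refl => intro h2; omega
  | @tail b e h' step ih =>
    intro h2
    by_cases hb : c.1 < b.1 ∨ c.2 < b.2
    · exact ih hb
    · push_neg at hb
      obtain ⟨hbX, heX, hadj⟩ := step
      refine ⟨e, heX, ?_⟩
      unfold Adj at hadj
      omega

lemma claimH (X : Finset (ℤ × ℤ)) (hpoly : IsPolyomino X) (hconv : IsConvexPoly X)
    {a b y : ℤ} (ha : ((a, y) : ℤ × ℤ) ∈ Verts X) (hb : ((b, y) : ℤ × ℤ) ∈ Verts X)
    (hab : a < b) : ((a + 1, y) : ℤ × ℤ) ∈ Verts X := by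
  obtain ⟨c1, c2, hcX, hc1, hc2⟩ := verts_cases ha
  obtain ⟨d1, d2, hdX, hd1, hd2⟩ := verts_cases hb
  simp only at hc1 hc2 hd1 hd2
  have key : ((a + 1, y) : ℤ × ℤ) ∈ X ∨ ((a + 1, y + 1) : ℤ × ℤ) ∈ X := by
    by_cases hrow : c2 = d2
    · have hmid : ((a + 1, c2) : ℤ × ℤ) ∈ X :=
        hconv.1 c1 d1 (a + 1) c2 hcX (by rw [hrow]; exact hdX) (by omega) (by omega)
      rcases hc2 with h2 | h2 <;> rw [h2] at hmid
      · exact Or.inl hmid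
      · exact Or.inr hmid
    · rcases hc2 with h2 | h2 <;> rcases hd2 with h3 | h3
      · exact absurd (h2.trans h3.symm) hrow
      · -- c2 = y, d2 = y + 1
        obtain ⟨x0, hx1, hx2⟩ := cross_row X (hpoly.2 (c1, c2) hcX (d1, d2) hdX) y
          (by simp; omega) (by simp; omega)
        by_cases hx : a + 1 ≤ x0
        · exact Or.inl (hconv.1 c1 x0 (a + 1) y (by rw [← h2]; exact hcX) hx1
            (by omega) hx)
        · exact Or.inr (hconv.1 x0 d1 (a + 1) (y + 1) hx2 (by rw [← h3]; exact hdX)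
            (by omega) (by omega))
      · -- c2 = y + 1, d2 = y
        obtain ⟨x0, hx1, hx2⟩ := cross_row X (hpoly.2 (d1, d2) hdX (c1, c2) hcX) y
          (by simp; omega) (by simp; omega)
        by_cases hx : a + 1 ≤ x0
        · exact Or.inr (hconv.1 c1 x0 (a + 1) (y + 1) (by rw [← h2]; exact hcX) hx2
            (by omega) hx)
        · exact Or.inl (hconv.1 x0 d1 (a + 1) y hx1 (by rw [← h3]; exact hdX)
            (by omega) (by omega))
      · exact absurd (h2.trans h3.symm) hrow
  rcases key with h | h
  · exact mem_verts_self h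
  · simpa using mem_verts_bot h

lemma claimV (X : Finset (ℤ × ℤ)) (hpoly : IsPolyomino X) (hconv : IsConvexPoly X)
    {a b y : ℤ} (ha : ((y, a) : ℤ × ℤ) ∈ Verts X) (hb : ((y, b) : ℤ × ℤ) ∈ Verts X)
    (hab : a < b) : ((y, a + 1) : ℤ × ℤ) ∈ Verts X := by
  obtain ⟨c1, c2, hcX, hc1, hc2⟩ := verts_cases ha
  obtain ⟨d1, d2, hdX, hd1, hd2⟩ := verts_cases hb
  simp only at hc1 hc2 hd1 hd2
  have key : ((y, a + 1) : ℤ × ℤ) ∈ X ∨ ((y + 1, a + 1) : ℤ × ℤ) ∈ X := by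
    by_cases hcol : c1 = d1
    · have hmid : ((c1, a + 1) : ℤ × ℤ) ∈ X :=
        hconv.2 c2 d2 (a + 1) c1 hcX (by rw [hcol]; exact hdX) (by omega) (by omega)
      rcases hc1 with h2 | h2 <;> rw [h2] at hmid
      · exact Or.inl hmid
      · exact Or.inr hmid
    · rcases hc1 with h2 | h2 <;> rcases hd1 with h3 | h3
      · exact absurd (h2.trans h3.symm) hcol
      · obtain ⟨y0, hy1, hy2⟩ := cross_col X (hpoly.2 (c1, c2) hcX (d1, d2) hdX) y
          (by simp; omega) (by simp; omega)
        by_cases hy : a + 1 ≤ y0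
        · exact Or.inl (hconv.2 c2 y0 (a + 1) y (by rw [← h2]; exact hcX) hy1
            (by omega) hy)
        · exact Or.inr (hconv.2 y0 d2 (a + 1) (y + 1) hy2 (by rw [← h3]; exact hdX)
            (by omega) (by omega))
      · obtain ⟨y0, hy1, hy2⟩ := cross_col X (hpoly.2 (d1, d2) hdX (c1, c2) hcX) y
          (by simp; omega) (by simp; omega)
        by_cases hy : a + 1 ≤ y0
        · exact Or.inr (hconv.2 c2 y0 (a + 1) (y + 1) (by rw [← h2]; exact hcX) hy2
            (by omega) hy)
        · exact Or.inl (hconv.2 y0 d2 (a + 1) y hy1 (by rw [← h3]; exact hdX)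
            (by omega) (by omega))
      · exact absurd (h2.trans h3.symm) hcol
  rcases key with h | h
  · exact mem_verts_self h
  · simpa using mem_verts_left h

lemma step_lemma (X : Finset (ℤ × ℤ)) (hpoly : IsPolyomino X) (hconv : IsConvexPoly X)
    (hlat : ∀ a ∈ Verts X, ∀ b ∈ Verts X, a ⊔ b ∈ Verts X ∧ a ⊓ b ∈ Verts X)
    {u v : ℤ × ℤ} (hu : u ∈ Verts X) (hv : v ∈ Verts X) (huv : u < v) :
    ∃ w ∈ Verts X, u ≤ w ∧ w ≤ v ∧ w.1 + w.2 = u.1 + u.2 + 1 := by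
  obtain ⟨h1, h2⟩ := Prod.le_def.mp huv.le
  have hne : u.1 < v.1 ∨ u.2 < v.2 := by
    rcases lt_or_eq_of_le h1 with h | h
    · exact Or.inl h
    rcases lt_or_eq_of_le h2 with h' | h'
    · exact Or.inr h'
    · exact absurd (Prod.ext h h') huv.ne
  by_cases hA : u.2 = v.2
  · have h1' : u.1 < v.1 := by omega
    refine ⟨(u.1 + 1, u.2), claimH X hpoly hconv (by simpa using hu)
      (by rw [hA]; simpa using hv) h1', Prod.le_def.mpr ⟨by simp, by simp⟩,
      Prod.le_def.mpr ⟨by simp; omega, by simp; omega⟩, by simp; ring⟩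
  by_cases hB : u.1 = v.1
  · have h2' : u.2 < v.2 := by omega
    refine ⟨(u.1, u.2 + 1), claimV X hpoly hconv (by simpa using hu)
      (by rw [hB]; simpa using hv) h2', Prod.le_def.mpr ⟨by simp, by simp⟩,
      Prod.le_def.mpr ⟨by simp; omega, by simp; omega⟩, by simp; ring⟩
  have h1' : u.1 < v.1 := by omega
  have h2' : u.2 < v.2 := by omega
  obtain ⟨c1, c2, hcX, hc1, hc2⟩ := verts_cases hu
  rcases hc1 with hc1 | hc1
  · rcases hc2 with hc2 | hc2
    · -- cell is u itself: use the escape lemma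
      obtain ⟨d1, d2, hdX, hd1, hd2⟩ := verts_cases hv
      obtain ⟨e, heX, hecase⟩ := escape X (hpoly.2 (c1, c2) hcX (d1, d2) hdX)
        (by simp; omega)
      have heV : e ∈ Verts X := ⟨e, heX, Or.inl rfl⟩
      simp only [hc1, hc2] at hecase
      rcases hecase with ⟨he1, he2⟩ | ⟨he1, he2⟩
      · have hsup : u ⊔ e = (u.1 + 1, u.2) := by
          have f1 : (u ⊔ e).1 = u.1 ⊔ e.1 := rfl
          have f2 : (u ⊔ e).2 = u.2 ⊔ e.2 := rfl
          rw [Prod.ext_iff, f1, f2]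
          constructor
          · simp only [he1]; exact sup_eq_right.mpr (by omega)
          · simpa using sup_eq_left.mpr he2
        refine ⟨(u.1 + 1, u.2), hsup ▸ (hlat u hu e heV).1,
          Prod.le_def.mpr ⟨by simp, by simp⟩,
          Prod.le_def.mpr ⟨by simp; omega, by simp; omega⟩, by simp; ring⟩
      · have hsup : u ⊔ e = (u.1, u.2 + 1) := by
          have f1 : (u ⊔ e).1 = u.1 ⊔ e.1 := rfl
          have f2 : (u ⊔ e).2 = u.2 ⊔ e.2 := rfl
          rw [Prod.ext_iff, f1, f2]
          constructor
          · simpa using sup_eq_left.mpr he1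
          · simp only [he2]; exact sup_eq_right.mpr (by omega)
        refine ⟨(u.1, u.2 + 1), hsup ▸ (hlat u hu e heV).1,
          Prod.le_def.mpr ⟨by simp, by simp⟩,
          Prod.le_def.mpr ⟨by simp; omega, by simp; omega⟩, by simp; ring⟩
    · -- cell is u + (0,1): its top-right corner is u + (0,1)
      refine ⟨(u.1, u.2 + 1), by rw [← hc1, ← hc2]; exact mem_verts_self hcX,
        Prod.le_def.mpr ⟨by simp, by simp⟩,
        Prod.le_def.mpr ⟨by simp; omega, by simp; omega⟩, by simp; ring⟩
  · rcases hc2 with hc2 | hc2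
    · -- cell is u + (1,0)
      refine ⟨(u.1 + 1, u.2), by rw [← hc1, ← hc2]; exact mem_verts_self hcX,
        Prod.le_def.mpr ⟨by simp, by simp⟩,
        Prod.le_def.mpr ⟨by simp; omega, by simp; omega⟩, by simp; ring⟩
    · -- cell is u + (1,1): its top-left corner is (u.1, u.2 + 1)
      refine ⟨(u.1, u.2 + 1), ?_, Prod.le_def.mpr ⟨by simp, by simp⟩,
        Prod.le_def.mpr ⟨by simp; omega, by simp; omega⟩, by simp; ring⟩
      have := mem_verts_left hcX
      rw [hc1, hc2] at this
      simpa using this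

end Helpers

theorem maximal_chains_are_lattice_paths (X : Finset (ℤ × ℤ)) (m n : ℕ)
    (hpoly : IsPolyomino X) (hconv : IsConvexPoly X)
    (hlat : LatticeSetup X m n)
    (c : Set (ℤ × ℤ)) (hc : c ⊆ Verts X) (hchain : IsChain (· ≤ ·) c)
    (hmax : ∀ c' : Set (ℤ × ℤ), c' ⊆ Verts X → IsChain (· ≤ ·) c' → c ⊆ c' → c' = c) :
    c.ncard = m + n + 1 ∧
      ∃ μ : ℕ → ℤ × ℤ, IsMaxChainPath X m n μ ∧ c = μ '' Set.Iic (m + n) := by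
  classical
  obtain ⟨hsl, h0V, hmnV, hbd⟩ := hlat
  -- the chain contains (0,0) and (m,n)
  have h0c : ((0, 0) : ℤ × ℤ) ∈ c := by
    have hch : IsChain (· ≤ ·) (insert ((0, 0) : ℤ × ℤ) c) :=
      hchain.insert (fun b hb _ => Or.inl (hbd b (hc hb)).1)
    have heq := hmax _ (Set.insert_subset h0V hc) hch (Set.subset_insert _ _)
    rw [← heq]; exact Set.mem_insert _ _
  have hmnc : (((m : ℤ), (n : ℤ)) : ℤ × ℤ) ∈ c := by
    have hch : IsChain (· ≤ ·) (insert (((m : ℤ), (n : ℤ)) : ℤ × ℤ) c) :=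
      hchain.insert (fun b hb _ => Or.inr (hbd b (hc hb)).2)
    have heq := hmax _ (Set.insert_subset hmnV hc) hch (Set.subset_insert _ _)
    rw [← heq]; exact Set.mem_insert _ _
  have hfin : c.Finite :=
    (Set.finite_Icc ((0, 0) : ℤ × ℤ) (((m : ℤ), (n : ℤ)) : ℤ × ℤ)).subset
      (fun x hx => Set.mem_Icc.mpr ⟨(hbd x (hc hx)).1, (hbd x (hc hx)).2⟩)
  have huniq : ∀ x ∈ c, ∀ y ∈ c, x.1 + x.2 = y.1 + y.2 → x = y := by
    intro x hx y hy hs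
    by_cases hxy : x = y
    · exact hxy
    · rcases hchain hx hy hxy with h | h <;>
        (have := Prod.le_def.mp h; exact Prod.ext (by omega) (by omega))
  have hcomp : ∀ x ∈ c, ∀ y ∈ c, x.1 + x.2 < y.1 + y.2 → x < y := by
    intro x hx y hy hs
    have hne : x ≠ y := fun h => by rw [h] at hs; omega
    rcases hchain hx hy hne with h | h
    · exact lt_of_le_of_ne h hne
    · exfalso; have := Prod.le_def.mp h; omega
  -- every level 0 ≤ k ≤ m + n is attained on the chain
  have hex : ∀ k : ℕ, k ≤ m + n → ∃ x ∈ c, x.1 + x.2 = (k : ℤ) := by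
    intro k hk
    by_contra hno
    push_neg at hno
    have hk0' : (0 : ℤ) ≠ (k : ℤ) := by
      have := hno _ h0c; simp at this; omega
    have hkmn : (m : ℤ) + (n : ℤ) ≠ (k : ℤ) := by
      have := hno _ hmnc; simp at this; omega
    have hAne : ∃ x ∈ c, x.1 + x.2 < (k : ℤ) := ⟨(0, 0), h0c, by simp; omega⟩
    have hBne : ∃ x ∈ c, (k : ℤ) < x.1 + x.2 :=
      ⟨((m : ℤ), (n : ℤ)), hmnc, by simp; omega⟩
    obtain ⟨u, huA, hum⟩ := Set.Finite.exists_maximalFor (fun x : ℤ × ℤ => x.1 + x.2)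
      {x ∈ c | x.1 + x.2 < (k : ℤ)} (hfin.subset (Set.sep_subset _ _))
      ⟨(0, 0), h0c, by simp; omega⟩
    obtain ⟨v, hvB, hvm⟩ := Set.Finite.exists_minimalFor (fun x : ℤ × ℤ => x.1 + x.2)
      {x ∈ c | (k : ℤ) < x.1 + x.2} (hfin.subset (Set.sep_subset _ _))
      ⟨((m : ℤ), (n : ℤ)), hmnc, by simp; omega⟩
    have hAle : ∀ x ∈ c, x.1 + x.2 < (k : ℤ) → x ≤ u := by
      intro x hx hxk
      rcases eq_or_ne x u with rfl | hne2
      · exact le_rfl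
      rcases hchain hx huA.1 hne2 with h | h
      · exact h
      · have hsum := Prod.le_def.mp h
        have heq := hum (j := x) ⟨hx, hxk⟩ (by show u.1 + u.2 ≤ x.1 + x.2; omega)
        exact le_of_eq (huniq u huA.1 x hx (by have h' : x.1 + x.2 ≤ u.1 + u.2 := heq; omega)).symm
    have hBge : ∀ x ∈ c, (k : ℤ) < x.1 + x.2 → v ≤ x := by
      intro x hx hxk
      rcases eq_or_ne x v with rfl | hne2
      · exact le_rfl
      rcases hchain hx hvB.1 hne2 with h | h
      · have hsum := Prod.le_def.mp h
        have heq := hvm (j := x) ⟨hx, hxk⟩ (by show x.1 + x.2 ≤ v.1 + v.2; omega)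
        exact le_of_eq (huniq v hvB.1 x hx (by have h' : v.1 + v.2 ≤ x.1 + x.2 := heq; omega))
      · exact h
    have huv : u < v := hcomp u huA.1 v hvB.1 (by have := huA.2; have := hvB.2; omega)
    obtain ⟨w, hwV, hw1, hw2, hw3⟩ :=
      step_lemma X hpoly hconv hsl (hc huA.1) (hc hvB.1) huv
    have husum : u.1 + u.2 < (k : ℤ) := huA.2
    have hvsum : (k : ℤ) < v.1 + v.2 := hvB.2
    have hw2' := Prod.le_def.mp hw2
    have hwc : w ∉ c := by
      intro hw
      have hwk : w.1 + w.2 ≠ (k : ℤ) := hno w hw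
      by_cases hlt : w.1 + w.2 < (k : ℤ)
      · have := Prod.le_def.mp (hAle w hw hlt); omega
      · have := Prod.le_def.mp (hBge w hw (by omega)); omega
    have hch' : IsChain (· ≤ ·) (insert w c) := by
      refine hchain.insert (fun x hx hne2 => ?_)
      by_cases hlt : x.1 + x.2 < (k : ℤ)
      · exact Or.inr ((hAle x hx hlt).trans hw1)
      · have hgt : (k : ℤ) < x.1 + x.2 :=
          lt_of_le_of_ne (by omega) (fun h => hno x hx h.symm)
        exact Or.inl (hw2.trans (hBge x hx hgt))
    have heq := hmax _ (Set.insert_subset hwV hc) hch' (Set.subset_insert _ _)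
    rw [← heq] at hwc
    exact hwc (Set.mem_insert _ _)
  choose f hf1 hf2 using hex
  set μ : ℕ → ℤ × ℤ := fun i => if h : i ≤ m + n then f i h else ((m : ℤ), (n : ℤ))
    with hμdef
  have hμle : ∀ i (h : i ≤ m + n), μ i = f i h := fun i h => dif_pos h
  have hend : ∀ i, m + n ≤ i → μ i = ((m : ℤ), (n : ℤ)) := by
    intro i hi
    by_cases h : i ≤ m + n
    · have hieq : i = m + n := le_antisymm h hi
      rw [hμle i h]
      refine huniq _ (hf1 i h) _ hmnc ?_
      rw [hf2 i h, hieq]; push_cast; ring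
    · simp only [hμdef]; rw [dif_neg h]
  have himg : c = μ '' Set.Iic (m + n) := by
    ext x
    constructor
    · intro hx
      have hb1 := Prod.le_def.mp (hbd x (hc hx)).1
      have hb2 := Prod.le_def.mp (hbd x (hc hx)).2
      simp only [Set.mem_image, Set.mem_Iic]
      refine ⟨(x.1 + x.2).toNat, by simp at hb1 hb2 ⊢; omega, ?_⟩
      have hk : (x.1 + x.2).toNat ≤ m + n := by simp at hb1 hb2 ⊢; omega
      rw [hμle _ hk]
      refine huniq _ (hf1 _ hk) _ hx ?_
      rw [hf2 _ hk]
      simp at hb1 ⊢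
      omega
    · rintro ⟨i, hi, rfl⟩
      rw [hμle i hi]
      exact hf1 i hi
  have hinj : Set.InjOn μ (Set.Iic (m + n)) := by
    intro i hi j hj hij
    rw [Set.mem_Iic] at hi hj
    rw [hμle i hi, hμle j hj] at hij
    have := hf2 i hi
    rw [hij, hf2 j hj] at this
    exact_mod_cast this.symm
  constructor
  · rw [himg, Set.ncard_image_of_injOn hinj, ← Finset.coe_Iic, Set.ncard_coe_finset,
      Nat.card_Iic]
  · refine ⟨μ, ⟨?_, ?_, hend, ?_⟩, himg⟩
    · rw [hμle 0 (Nat.zero_le _)]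
      refine huniq _ (hf1 0 _) _ h0c ?_
      rw [hf2]; simp
    · intro i hi
      have h1 : i ≤ m + n := by omega
      have h2 : i + 1 ≤ m + n := by omega
      rw [hμle i h1, hμle (i + 1) h2]
      have ha := hf2 i h1
      have hb := hf2 (i + 1) h2
      have hlt : f i h1 < f (i + 1) h2 :=
        hcomp _ (hf1 i h1) _ (hf1 (i + 1) h2) (by rw [ha, hb]; push_cast; omega)
      have hle := Prod.le_def.mp hlt.le
      push_cast at hb
      rw [Prod.ext_iff, Prod.ext_iff]
      simp only [Prod.fst_sub, Prod.snd_sub, Prod.fst, Prod.snd]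
      omega
    · intro i hi
      rw [hμle i hi]
      exact hc (hf1 i hi)
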